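/- Every convex graph invariant f : Sⁿ → ℝ can be expressed as a pointwise supremum of shifted elementary convex graph invariants: there exist a set 𝒫 ⊆ Sⁿ and reals α_P such that f(A) = sup_{P ∈ 𝒫} (Θ_P(A) − α_P) for all A ∈ Sⁿ. -/

import Mathlib

open Matrix

noncomputable def permConj {n : ℕ} (σ : Equiv.Perm (Fin n))
    (A : Matrix (Fin n) (Fin n) ℝ) : Matrix (Fin n) (Fin n) ℝ :=
  (σ.permMatrix ℝ) * A * (σ.permMatrix ℝ)ᵀ

/-- The elementary convex graph invariant `Θ_P(A) = max_Π tr(P Π A Πᵀ)`. -/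
noncomputable def theta {n : ℕ} (P A : Matrix (Fin n) (Fin n) ℝ) : ℝ :=
  (Finset.univ : Finset (Equiv.Perm (Fin n))).sup' Finset.univ_nonempty
    (fun σ => (P * permConj σ A).trace)

section Aux

open Set

attribute [local instance] Matrix.normedAddCommGroup Matrix.normedSpace

lemma permConj_one {n : ℕ} (A : Matrix (Fin n) (Fin n) ℝ) : permConj 1 A = A := by
  have h : (1 : Equiv.Perm (Fin n)) = Equiv.refl (Fin n) := rfl
  simp [permConj, Equiv.Perm.permMatrix, h, Equiv.toPEquiv_refl, PEquiv.toMatrix_refl]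

lemma permConj_isSymm {n : ℕ} {A : Matrix (Fin n) (Fin n) ℝ} (hA : A.IsSymm)
    (σ : Equiv.Perm (Fin n)) : (permConj σ A).IsSymm := by
  unfold permConj Matrix.IsSymm at *
  rw [transpose_mul, transpose_mul, transpose_transpose, hA, mul_assoc]

lemma trace_le_theta {n : ℕ} (P A : Matrix (Fin n) (Fin n) ℝ) :
    (P * A).trace ≤ theta P A := by
  have h := Finset.le_sup' (fun σ : Equiv.Perm (Fin n) => (P * permConj σ A).trace)
    (Finset.mem_univ (1 : Equiv.Perm (Fin n)))
  rw [permConj_one] at h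
  exact h

lemma isClosed_epi {β : Type*} [TopologicalSpace β] {S : Set β} {f : β → ℝ}
    (hS : IsClosed S) (hf : LowerSemicontinuousOn f S) :
    IsClosed {p : β × ℝ | p.1 ∈ S ∧ f p.1 ≤ p.2} := by
  rw [← isOpen_compl_iff, isOpen_iff_mem_nhds]
  rintro ⟨B, t⟩ hp
  simp only [mem_compl_iff, mem_setOf_eq, not_and, not_le] at hp
  by_cases hB : B ∈ S
  · have hlt : t < f B := hp hB
    obtain ⟨y, hy1, hy2⟩ := exists_between hlt
    have hev : ∀ᶠ x in nhdsWithin B S, y < f x := hf B hB y hy2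
    rw [eventually_nhdsWithin_iff] at hev
    obtain ⟨V, hV, hVsub⟩ := Filter.eventually_iff_exists_mem.mp hev
    have hmem : V ×ˢ Iio y ∈ nhds ((B, t) : β × ℝ) :=
      prod_mem_nhds hV (Iio_mem_nhds hy1)
    refine Filter.mem_of_superset hmem ?_
    rintro ⟨x, s⟩ ⟨hx, hs⟩
    simp only [mem_compl_iff, mem_setOf_eq, not_and, not_le]
    intro hxS
    exact lt_trans hs (hVsub x hx hxS)
  · have hmem : Sᶜ ×ˢ (univ : Set ℝ) ∈ nhds ((B, t) : β × ℝ) :=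
      prod_mem_nhds (hS.isOpen_compl.mem_nhds hB) Filter.univ_mem
    refine Filter.mem_of_superset hmem ?_
    rintro ⟨x, s⟩ ⟨hx, -⟩
    simp only [mem_compl_iff, mem_setOf_eq, not_and]
    exact fun h => absurd h hx

lemma trace_rep {n : ℕ} (L : Matrix (Fin n) (Fin n) ℝ →L[ℝ] ℝ) :
    ∃ P : Matrix (Fin n) (Fin n) ℝ, ∀ B, (P * B).trace = L B := by
  classical
  refine ⟨Matrix.of (fun i j => L (single j i 1)), fun B => ?_⟩
  conv_rhs => rw [matrix_eq_sum_single B]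
  rw [map_sum]
  simp only [map_sum]
  rw [Matrix.trace]
  simp only [Matrix.diag, Matrix.mul_apply, Matrix.of_apply]
  rw [Finset.sum_comm]
  refine Finset.sum_congr rfl fun i _ => Finset.sum_congr rfl fun j _ => ?_
  have h : single i j (B i j) = (B i j) • single i j (1:ℝ) := by
    rw [smul_single, smul_eq_mul, mul_one]
  rw [h, _root_.map_smul, smul_eq_mul, mul_comm]

end Aux

theorem stmt1 (n : ℕ) (f : Matrix (Fin n) (Fin n) ℝ → ℝ)
    (hconv : ConvexOn ℝ {A : Matrix (Fin n) (Fin n) ℝ | A.IsSymm} f)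
    (hinv : ∀ (A : Matrix (Fin n) (Fin n) ℝ), A.IsSymm →
      ∀ σ : Equiv.Perm (Fin n), f (permConj σ A) = f A)
    (hlsc : LowerSemicontinuousOn f {A : Matrix (Fin n) (Fin n) ℝ | A.IsSymm}) :
    ∃ (Ps : Set (Matrix (Fin n) (Fin n) ℝ)) (α : Matrix (Fin n) (Fin n) ℝ → ℝ),
      ∀ A : Matrix (Fin n) (Fin n) ℝ, A.IsSymm →
        IsLUB {t : ℝ | ∃ P ∈ Ps, t = theta P A - α P} (f A) := by
  classical
  letI : NormedAddCommGroup (Matrix (Fin n) (Fin n) ℝ) := Matrix.normedAddCommGroup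
  letI : NormedSpace ℝ (Matrix (Fin n) (Fin n) ℝ) := Matrix.normedSpace
  set S : Set (Matrix (Fin n) (Fin n) ℝ) := {A | A.IsSymm} with hSdef
  set D : Matrix (Fin n) (Fin n) ℝ → Set ℝ :=
    fun P => (fun B => theta P B - f B) '' S with hDdef
  refine ⟨{P | BddAbove (D P)}, fun P => sSup (D P), fun A hA => ?_⟩
  constructor
  · rintro t ⟨P, hP, rfl⟩
    have h1 : theta P A - f A ≤ sSup (D P) := le_csSup hP ⟨A, hA, rfl⟩
    simp only [Set.mem_setOf_eq]
    linarith
  · intro b hb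
    by_contra hba
    push_neg at hba
    have hSclosed : IsClosed S := isClosed_eq continuous_id.matrix_transpose continuous_id
    have hepi_cl : IsClosed {p : Matrix (Fin n) (Fin n) ℝ × ℝ | p.1 ∈ S ∧ f p.1 ≤ p.2} :=
      isClosed_epi hSclosed hlsc
    have hepi_cv : Convex ℝ {p : Matrix (Fin n) (Fin n) ℝ × ℝ | p.1 ∈ S ∧ f p.1 ≤ p.2} :=
      hconv.convex_epigraph
    have hx : ((A, b) : Matrix (Fin n) (Fin n) ℝ × ℝ) ∉
        {p : Matrix (Fin n) (Fin n) ℝ × ℝ | p.1 ∈ S ∧ f p.1 ≤ p.2} := by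
      rintro ⟨-, h2⟩
      exact absurd h2 (not_le.mpr hba)
    haveI : LocallyConvexSpace ℝ (Matrix (Fin n) (Fin n) ℝ × ℝ) := NormedSpace.toLocallyConvexSpace
    obtain ⟨ℓ, u, hvals, hux⟩ := geometric_hahn_banach_closed_point hepi_cv hepi_cl hx
    set L := ℓ.comp (ContinuousLinearMap.inl ℝ (Matrix (Fin n) (Fin n) ℝ) ℝ) with hLdef
    set β := ℓ (0, 1) with hβdef
    have hdec : ∀ (B : Matrix (Fin n) (Fin n) ℝ) (t : ℝ), ℓ (B, t) = L B + t * β := by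
      intro B t
      have h1 : ((B, t) : Matrix (Fin n) (Fin n) ℝ × ℝ)
          = (B, (0:ℝ)) + t • ((0 : Matrix (Fin n) (Fin n) ℝ), (1:ℝ)) := by
        simp [Prod.ext_iff]
      rw [h1, map_add, _root_.map_smul, smul_eq_mul]
      simp [hLdef, hβdef, ContinuousLinearMap.comp_apply]
    have hAepi := hvals (A, f A) ⟨hA, le_refl _⟩
    rw [hdec] at hAepi
    rw [hdec] at hux
    have hβneg : β < 0 := by nlinarith
    obtain ⟨P₀, hP₀⟩ := trace_rep L
    set γ := (-β)⁻¹ with hγdef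
    have hγpos : 0 < γ := inv_pos.mpr (by linarith)
    have hγβ : γ * (-β) = 1 := inv_mul_cancel₀ (by linarith)
    set P' := γ • P₀ with hP'def
    have htr : ∀ B : Matrix (Fin n) (Fin n) ℝ, (P' * B).trace = γ * L B := by
      intro B
      rw [hP'def, Matrix.smul_mul, Matrix.trace_smul, hP₀, smul_eq_mul]
    set c := γ * u with hcdef
    have hminor : ∀ B ∈ S, (P' * B).trace - c ≤ f B := by
      intro B hB
      have h1 := hvals (B, f B) ⟨hB, le_refl _⟩
      rw [hdec] at h1
      rw [htr]
      have h2 : γ * (L B + f B * β) ≤ γ * u := (mul_le_mul_of_nonneg_left h1.le hγpos.le)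
      have h3 : γ * (f B * β) = -f B := by
        have : γ * (f B * β) = -(f B * (γ * -β)) := by ring
        rw [this, hγβ]; ring
      have h4 : γ * (L B + f B * β) = γ * L B + γ * (f B * β) := by ring
      linarith
    have hθle : ∀ B ∈ S, theta P' B ≤ f B + c := by
      intro B hB
      unfold theta
      refine Finset.sup'_le _ _ fun σ _ => ?_
      have hBσ : permConj σ B ∈ S := permConj_isSymm hB σ
      have h2 := hminor _ hBσ
      rw [hinv B hB σ] at h2
      linarith
    have hDbdd : BddAbove (D P') := by
      refine ⟨c, ?_⟩
      rintro t ⟨B, hB, rfl⟩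
      have := hθle B hB
      simp only
      linarith
    have hDnon : (D P').Nonempty := ⟨theta P' A - f A, ⟨A, hA, rfl⟩⟩
    have hsup_le : sSup (D P') ≤ c := by
      refine csSup_le hDnon ?_
      rintro t ⟨B, hB, rfl⟩
      have := hθle B hB
      simp only
      linarith
    have htrA : b < (P' * A).trace - c := by
      rw [htr]
      have h2 : γ * u < γ * (L A + b * β) := (mul_lt_mul_of_pos_left hux hγpos)
      have h3 : γ * (b * β) = -b := by
        have : γ * (b * β) = -(b * (γ * -β)) := by ring
        rw [this, hγβ]; ring
      have h4 : γ * (L A + b * β) = γ * L A + γ * (b * β) := by ring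
      linarith
    have hthA : (P' * A).trace ≤ theta P' A := trace_le_theta P' A
    have hfin : theta P' A - sSup (D P') ≤ b := hb ⟨P', hDbdd, rfl⟩
    linarith
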